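/- Let A : X → Y* be a continuous linear operator, C ⊆ X, K ⊆ Y closed convex cones, and let v be the value of the game G = (α,β,A) for some α ∈ int C*, β ∈ int K*. Then v ≠ 0 if and only if exactly one of the following holds: (i) there exists y ∈ K ∖ {0} such that −A*y ∈ int C*; (ii) there exists x ∈ C ∖ {0} such that Ax ∈ int K*. -/

import Mathlib

set_option synthInstance.maxHeartbeats 400000
set_option maxHeartbeats 1000000

section helpers
variable {E : Type*} [NormedAddCommGroup E] [NormedSpace ℝ E]

lemma stmt11_dual_int {C : Set E} {w : E →L[ℝ] ℝ}
    (h : w ∈ interior {w : E →L[ℝ] ℝ | ∀ x ∈ C, 0 ≤ w x}) :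
    ∃ ε > 0, ∀ x ∈ C, ε * ‖x‖ ≤ w x := by
  rw [mem_interior_iff_mem_nhds, Metric.mem_nhds_iff] at h
  obtain ⟨ε, hε, hball⟩ := h
  refine ⟨ε / 2, by linarith, fun x hx => ?_⟩
  rcases eq_or_ne x 0 with rfl | hx0
  · simp
  obtain ⟨g, hg1, hgx⟩ := exists_dual_vector ℝ x (norm_ne_zero_iff.mpr hx0)
  have hmem : w - (ε / 2) • g ∈ Metric.ball w ε := by
    rw [Metric.mem_ball, dist_eq_norm]
    have : w - (ε / 2) • g - w = -((ε / 2) • g) := by abel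
    rw [this, norm_neg]
    have h5 : ‖(ε / 2) • g‖ ≤ ‖(ε/2 : ℝ)‖ * ‖g‖ := ContinuousLinearMap.opNorm_smul_le _ _
    rw [hg1, Real.norm_eq_abs, abs_of_pos (by linarith : (0:ℝ) < ε / 2)] at h5
    linarith
  have h0 := hball hmem x hx
  simp only [ContinuousLinearMap.sub_apply, ContinuousLinearMap.smul_apply,
    smul_eq_mul, Set.mem_setOf_eq] at h0
  have hgx' : g x = ‖x‖ := by exact_mod_cast hgx
  rw [hgx'] at h0
  linarith

lemma stmt11_int_of_bound {C : Set E} {w : E →L[ℝ] ℝ} {ε : ℝ} (hε : 0 < ε)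
    (h : ∀ x ∈ C, ε * ‖x‖ ≤ w x) :
    w ∈ interior {w : E →L[ℝ] ℝ | ∀ x ∈ C, 0 ≤ w x} := by
  refine mem_interior.mpr ⟨Metric.ball w ε, ?_, Metric.isOpen_ball, Metric.mem_ball_self hε⟩
  intro z hz x hx
  have hz' : ‖z - w‖ < ε := by rwa [Metric.mem_ball, dist_eq_norm] at hz
  have h1 := h x hx
  have h2 : |(z - w) x| ≤ ‖z - w‖ * ‖x‖ := by
    rw [← Real.norm_eq_abs]; exact (z - w).le_opNorm x
  have h3 : (z - w) x = z x - w x := rfl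
  have h4 : -(‖z - w‖ * ‖x‖) ≤ z x - w x := by rw [← h3]; exact neg_le_of_abs_le h2
  nlinarith [norm_nonneg x, norm_nonneg (z - w)]

end helpers

/-- Lemma 4.2: the game G = (α,β,A) has value v ≠ 0 iff exactly one of
(i) ∃ y ∈ K ∖ {0} with −A*y ∈ int C*, (ii) ∃ x ∈ C ∖ {0} with Ax ∈ int K* holds. -/
theorem stmt11
    {X Y : Type*} [NormedAddCommGroup X] [NormedSpace ℝ X] [CompleteSpace X]
    [NormedAddCommGroup Y] [NormedSpace ℝ Y] [CompleteSpace Y]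
    -- reflexivity of X and Y
    (hXrefl : Function.Surjective (NormedSpace.inclusionInDoubleDual ℝ X))
    (hYrefl : Function.Surjective (NormedSpace.inclusionInDoubleDual ℝ Y))
    (A : X →L[ℝ] (Y →L[ℝ] ℝ))
    -- closed convex cones C, K with solid dual cones
    (C : Set X) (K : Set Y)
    (hCcone : ∀ (r : ℝ), 0 ≤ r → ∀ x ∈ C, r • x ∈ C) (hCconv : Convex ℝ C)
    (hCclosed : IsClosed C)
    (hKcone : ∀ (r : ℝ), 0 ≤ r → ∀ y ∈ K, r • y ∈ K) (hKconv : Convex ℝ K)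
    (hKclosed : IsClosed K)
    (Cstar : Set (X →L[ℝ] ℝ)) (hCstar : Cstar = {w : X →L[ℝ] ℝ | ∀ x ∈ C, 0 ≤ w x})
    (Kstar : Set (Y →L[ℝ] ℝ)) (hKstar : Kstar = {z : Y →L[ℝ] ℝ | ∀ y ∈ K, 0 ≤ z y})
    -- the game G = (α,β,A) with α ∈ int C*, β ∈ int K*
    (α : X →L[ℝ] ℝ) (hα : α ∈ interior Cstar)
    (β : Y →L[ℝ] ℝ) (hβ : β ∈ interior Kstar)
    (S : Set X) (hS : S = {x ∈ C | α x = 1})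
    (T : Set Y) (hT : T = {y ∈ K | β y = 1})
    -- finite security levels (F3)
    (hSne : S.Nonempty) (hTne : T.Nonempty)
    (hbb : ∀ x ∈ S, BddBelow ((fun y => A x y) '' T))
    (hba : BddAbove ((fun x => sInf ((fun y => A x y) '' T)) '' S))
    (hba' : ∀ y ∈ T, BddAbove ((fun x => A x y) '' S))
    (hbb' : BddBelow ((fun y => sSup ((fun x => A x y) '' S)) '' T))
    -- v is the value of the game
    (v : ℝ)
    (hv : v = sSup ((fun x => sInf ((fun y => A x y) '' T)) '' S))
    (hv' : v = sInf ((fun y => sSup ((fun x => A x y) '' S)) '' T)) :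
    v ≠ 0 ↔
      Xor' (∃ y ∈ K, y ≠ 0 ∧ -(A.flip y) ∈ interior Cstar)
           (∃ x ∈ C, x ≠ 0 ∧ A x ∈ interior Kstar) := by
  subst hCstar hKstar hS hT
  obtain ⟨εα, hεα, hαb⟩ := stmt11_dual_int hα
  obtain ⟨εβ, hεβ, hβb⟩ := stmt11_dual_int hβ
  have hαpos : ∀ x ∈ C, x ≠ 0 → 0 < α x := by
    intro x hx h0
    have h1 := hαb x hx
    have : 0 < ‖x‖ := norm_pos_iff.mpr h0
    nlinarith
  have hβpos : ∀ y ∈ K, y ≠ 0 → 0 < β y := by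
    intro y hy h0
    have h1 := hβb y hy
    have : 0 < ‖y‖ := norm_pos_iff.mpr h0
    nlinarith
  have hβnorm : 0 < ‖β‖ := by
    obtain ⟨y0, hy0K, hy0β⟩ := hTne
    refine norm_pos_iff.mpr fun h => ?_
    rw [h] at hy0β; simp at hy0β
  have hαnorm : 0 < ‖α‖ := by
    obtain ⟨x0, hx0C, hx0α⟩ := hSne
    refine norm_pos_iff.mpr fun h => ?_
    rw [h] at hx0α; simp at hx0α
  -- (ii) → 0 < v
  have h2v : (∃ x ∈ C, x ≠ 0 ∧ A x ∈ interior {z : Y →L[ℝ] ℝ | ∀ y ∈ K, 0 ≤ z y}) → 0 < v := by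
    rintro ⟨x, hxC, hx0, hxint⟩
    obtain ⟨ε, hε, hb⟩ := stmt11_dual_int hxint
    have hax : 0 < α x := hαpos x hxC hx0
    have hinv : 0 < (α x)⁻¹ := inv_pos.mpr hax
    set x' := (α x)⁻¹ • x with hx'def
    have hx'S : x' ∈ {x ∈ C | α x = 1} := by
      refine ⟨hCcone _ hinv.le x hxC, ?_⟩
      simp [hx'def, inv_mul_cancel₀ hax.ne']
    have key : ∀ y ∈ {y ∈ K | β y = 1}, ε * (α x)⁻¹ / ‖β‖ ≤ A x' y := by
      rintro y ⟨hyK, hyβ⟩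
      have h1 : 1 ≤ ‖β‖ * ‖y‖ := by
        have := β.le_opNorm y
        rw [hyβ] at this
        simpa using this
      have h2 : ε * ‖y‖ ≤ A x y := hb y hyK
      have h3 : A x' y = (α x)⁻¹ * A x y := by
        simp [hx'def, map_smul]
      have h4 : ε * (α x)⁻¹ / ‖β‖ ≤ (α x)⁻¹ * (ε * ‖y‖) := by
        rw [div_le_iff₀ hβnorm]
        nlinarith [mul_pos hε hinv]
      rw [h3]
      nlinarith
    have hle : ε * (α x)⁻¹ / ‖β‖ ≤ sInf ((fun y => A x' y) '' {y ∈ K | β y = 1}) := by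
      refine le_csInf (hTne.image _) ?_
      rintro a ⟨y, hyT, rfl⟩
      exact key y hyT
    have hle2 : sInf ((fun y => A x' y) '' {y ∈ K | β y = 1}) ≤ v := by
      rw [hv]
      exact le_csSup hba (Set.mem_image_of_mem _ hx'S)
    have : 0 < ε * (α x)⁻¹ / ‖β‖ := by positivity
    linarith
  -- (i) → v < 0
  have h1v : (∃ y ∈ K, y ≠ 0 ∧ -(A.flip y) ∈ interior {w : X →L[ℝ] ℝ | ∀ x ∈ C, 0 ≤ w x}) → v < 0 := by
    rintro ⟨y, hyK, hy0, hyint⟩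
    obtain ⟨ε, hε, hb⟩ := stmt11_dual_int hyint
    have hby : 0 < β y := hβpos y hyK hy0
    have hinv : 0 < (β y)⁻¹ := inv_pos.mpr hby
    set y' := (β y)⁻¹ • y with hy'def
    have hy'T : y' ∈ {y ∈ K | β y = 1} := by
      refine ⟨hKcone _ hinv.le y hyK, ?_⟩
      simp [hy'def, inv_mul_cancel₀ hby.ne']
    have key : ∀ x ∈ {x ∈ C | α x = 1}, A x y' ≤ -(ε * (β y)⁻¹ / ‖α‖) := by
      rintro x ⟨hxC, hxα⟩
      have h1 : 1 ≤ ‖α‖ * ‖x‖ := by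
        have := α.le_opNorm x
        rw [hxα] at this
        simpa using this
      have h2 : ε * ‖x‖ ≤ -(A x y) := by
        have := hb x hxC
        simpa [ContinuousLinearMap.neg_apply, ContinuousLinearMap.flip_apply] using this
      have h3 : A x y' = (β y)⁻¹ * A x y := by
        simp [hy'def, map_smul]
      have h4 : ε * (β y)⁻¹ / ‖α‖ ≤ (β y)⁻¹ * (ε * ‖x‖) := by
        rw [div_le_iff₀ hαnorm]
        nlinarith [mul_pos hε hinv]
      rw [h3]
      nlinarith
    have hle : sSup ((fun x => A x y') '' {x ∈ C | α x = 1}) ≤ -(ε * (β y)⁻¹ / ‖α‖) := by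
      refine csSup_le (hSne.image _) ?_
      rintro a ⟨x, hxS, rfl⟩
      exact key x hxS
    have hle2 : v ≤ sSup ((fun x => A x y') '' {x ∈ C | α x = 1}) := by
      rw [hv']
      exact csInf_le hbb' (Set.mem_image_of_mem _ hy'T)
    have : 0 < ε * (β y)⁻¹ / ‖α‖ := by positivity
    linarith
  -- 0 < v → (ii)
  have hv2 : 0 < v → (∃ x ∈ C, x ≠ 0 ∧ A x ∈ interior {z : Y →L[ℝ] ℝ | ∀ y ∈ K, 0 ≤ z y}) := by
    intro hvpos
    rw [hv] at hvpos
    obtain ⟨a, ⟨x, hxS, rfl⟩, ha⟩ := exists_lt_of_lt_csSup (hSne.image _) hvpos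
    have hxC := hxS.1
    have hx0 : x ≠ 0 := by
      intro h
      have := hxS.2
      rw [h] at this; simp at this
    set m := sInf ((fun y => A x y) '' {y ∈ K | β y = 1}) with hm
    have hmle : ∀ y ∈ {y ∈ K | β y = 1}, m ≤ A x y := fun y hyT =>
      csInf_le (hbb x hxS) (Set.mem_image_of_mem _ hyT)
    have hk : ∀ y ∈ K, m * εβ * ‖y‖ ≤ A x y := by
      intro y hyK
      rcases eq_or_ne y 0 with rfl | hy0
      · simp
      have hby : 0 < β y := hβpos y hyK hy0
      have hinv : 0 < (β y)⁻¹ := inv_pos.mpr hby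
      have hyT : (β y)⁻¹ • y ∈ {y ∈ K | β y = 1} := by
        refine ⟨hKcone _ hinv.le y hyK, ?_⟩
        simp [inv_mul_cancel₀ hby.ne']
      have h1 := hmle _ hyT
      have h1' : m ≤ (β y)⁻¹ * A x y := by
        simpa [map_smul] using h1
      have h2 : εβ * ‖y‖ ≤ β y := hβb y hyK
      have h3 : m * β y ≤ A x y := by
        have := mul_le_mul_of_nonneg_left h1' hby.le
        rw [← mul_assoc, mul_inv_cancel₀ hby.ne', one_mul] at this
        linarith [this]
      nlinarith
    refine ⟨x, hxC, hx0, stmt11_int_of_bound (mul_pos (by linarith : (0:ℝ) < m) hεβ) ?_⟩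
    intro y hyK
    exact hk y hyK
  -- v < 0 → (i)
  have hv1 : v < 0 → (∃ y ∈ K, y ≠ 0 ∧ -(A.flip y) ∈ interior {w : X →L[ℝ] ℝ | ∀ x ∈ C, 0 ≤ w x}) := by
    intro hvneg
    rw [hv'] at hvneg
    obtain ⟨a, ⟨y, hyT, rfl⟩, ha⟩ := exists_lt_of_csInf_lt (hTne.image _) hvneg
    have hyK := hyT.1
    have hy0 : y ≠ 0 := by
      intro h
      have := hyT.2
      rw [h] at this; simp at this
    set m := sSup ((fun x => A x y) '' {x ∈ C | α x = 1}) with hm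
    have hmle : ∀ x ∈ {x ∈ C | α x = 1}, A x y ≤ m := fun x hxS =>
      le_csSup (hba' y hyT) (Set.mem_image_of_mem _ hxS)
    have hk : ∀ x ∈ C, (-m) * εα * ‖x‖ ≤ (-(A.flip y)) x := by
      intro x hxC
      rcases eq_or_ne x 0 with rfl | hx0
      · simp
      have hax : 0 < α x := hαpos x hxC hx0
      have hinv : 0 < (α x)⁻¹ := inv_pos.mpr hax
      have hxS : (α x)⁻¹ • x ∈ {x ∈ C | α x = 1} := by
        refine ⟨hCcone _ hinv.le x hxC, ?_⟩
        simp [inv_mul_cancel₀ hax.ne']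
      have h1 := hmle _ hxS
      have h1' : (α x)⁻¹ * A x y ≤ m := by
        simpa [map_smul] using h1
      have h2 : εα * ‖x‖ ≤ α x := hαb x hxC
      have h3 : A x y ≤ m * α x := by
        have := mul_le_mul_of_nonneg_left h1' hax.le
        rw [← mul_assoc, mul_inv_cancel₀ hax.ne', one_mul] at this
        linarith [this]
      have h4 : (-(A.flip y)) x = -(A x y) := by
        simp [ContinuousLinearMap.neg_apply, ContinuousLinearMap.flip_apply]
      rw [h4]
      nlinarith
    refine ⟨y, hyK, hy0, stmt11_int_of_bound (mul_pos (by linarith : (0:ℝ) < -m) hεα) ?_⟩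
    intro x hxC
    exact hk x hxC
  -- mutual exclusion
  have hexcl : ¬((∃ y ∈ K, y ≠ 0 ∧ -(A.flip y) ∈ interior {w : X →L[ℝ] ℝ | ∀ x ∈ C, 0 ≤ w x}) ∧
      (∃ x ∈ C, x ≠ 0 ∧ A x ∈ interior {z : Y →L[ℝ] ℝ | ∀ y ∈ K, 0 ≤ z y})) := by
    rintro ⟨h1, h2⟩
    have hv1' := h1v h1
    have hv2' := h2v h2
    linarith
  constructor
  · intro hne
    rcases lt_or_gt_of_ne hne with hlt | hgt
    · exact Or.inl ⟨hv1 hlt, fun h2 => hexcl ⟨hv1 hlt, h2⟩⟩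
    · exact Or.inr ⟨hv2 hgt, fun h1 => hexcl ⟨h1, hv2 hgt⟩⟩
  · rintro (⟨h1, _⟩ | ⟨h2, _⟩)
    · exact ne_of_lt (h1v h1)
    · exact ne_of_gt (h2v h2)
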